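/- Let A ∈ ℝ^{n×n} with n ≥ 3 and let k be odd with 1 < k < n−1. Then A^{[k]} is Metzler if and only if: a_{1n} ≥ 0, a_{n1} ≥ 0, a_{ij} ≥ 0 for all i,j with |i−j| = 1, and a_{ij} = 0 for all i,j with 1 < |i−j| < n−1. -/

import Mathlib

open Matrix

/-- The `k`-multiplicative compound of a matrix: the matrix of all `k × k` minors,
indexed by the `k`-element subsets of the row and column index sets (ordered
increasingly / lexicographically). -/
noncomputable def mulCompound {𝕜 : Type*} [CommRing 𝕜] {n m : ℕ}
    (A : Matrix (Fin n) (Fin m) 𝕜) (k : ℕ) :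
    Matrix {s : Finset (Fin n) // s.card = k} {t : Finset (Fin m) // t.card = k} 𝕜 :=
  fun α β => (A.submatrix (α.1.orderEmbOfFin α.2) (β.1.orderEmbOfFin β.2)).det

/-- The `k`-additive compound: `A^{[k]} := (d/dε) (I + ε A)^{(k)} |_{ε = 0}`. -/
noncomputable def addCompound {𝕜 : Type*} [NontriviallyNormedField 𝕜] {n : ℕ}
    (A : Matrix (Fin n) (Fin n) 𝕜) (k : ℕ) :
    Matrix {s : Finset (Fin n) // s.card = k} {s : Finset (Fin n) // s.card = k} 𝕜 :=
  fun α β => deriv (fun ε : 𝕜 => mulCompound (1 + ε • A) k α β) 0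

/-- A square matrix is Metzler if all its off-diagonal entries are nonnegative. -/
def IsMetzler {ι : Type*} (B : Matrix ι ι ℝ) : Prop :=
  ∀ i j, i ≠ j → 0 ≤ B i j

section
open Finset

lemma hasDerivAt_det_add_smul {K : ℕ} (P B : Matrix (Fin K) (Fin K) ℝ) :
    HasDerivAt (fun ε : ℝ => (P + ε • B).det) (∑ r, (P.updateRow r (B r)).det) 0 := by
  have key : ∀ σ : Equiv.Perm (Fin K),
      HasDerivAt (fun ε : ℝ => ∏ i, (P (σ i) i + ε * B (σ i) i))
        (∑ i, (∏ j ∈ Finset.univ.erase i, P (σ j) j) * B (σ i) i) 0 := by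
    intro σ
    have h := HasDerivAt.fun_finsetProd (u := Finset.univ) (x := (0:ℝ))
      (f := fun i ε => P (σ i) i + ε * B (σ i) i) (f' := fun i => B (σ i) i)
      (fun i _ => by
        exact (hasDerivAt_mul_const (B (σ i) i)).const_add (P (σ i) i))
    simpa using h
  have h2 : HasDerivAt
      (fun ε : ℝ => ∑ σ : Equiv.Perm (Fin K),
        (Equiv.Perm.sign σ : ℤ) • ∏ i, (P (σ i) i + ε * B (σ i) i))
      (∑ σ : Equiv.Perm (Fin K),
        (Equiv.Perm.sign σ : ℤ) • ∑ i, (∏ j ∈ Finset.univ.erase i, P (σ j) j) * B (σ i) i) 0 :=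
    HasDerivAt.fun_sum fun σ _ => ((key σ).const_smul ((Equiv.Perm.sign σ : ℤ)))
  have hfun : (fun ε : ℝ => (P + ε • B).det)
      = fun ε : ℝ => ∑ σ : Equiv.Perm (Fin K),
        (Equiv.Perm.sign σ : ℤ) • ∏ i, (P (σ i) i + ε * B (σ i) i) := by
    funext ε
    rw [Matrix.det_apply]
    refine Finset.sum_congr rfl fun σ _ => ?_
    congr 1
  have hval : (∑ σ : Equiv.Perm (Fin K),
        (Equiv.Perm.sign σ : ℤ) • ∑ i, (∏ j ∈ Finset.univ.erase i, P (σ j) j) * B (σ i) i)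
      = ∑ r, (P.updateRow r (B r)).det := by
    have rhs : ∀ r, (P.updateRow r (B r)).det
        = ∑ σ : Equiv.Perm (Fin K), (Equiv.Perm.sign σ : ℤ) •
            ∏ i, (if σ i = r then B r i else P (σ i) i) := by
      intro r
      rw [Matrix.det_apply]
      refine Finset.sum_congr rfl fun σ _ => ?_
      congr 1
      refine Finset.prod_congr rfl fun i _ => ?_
      simp [Matrix.updateRow_apply]
    simp_rw [rhs]
    rw [Finset.sum_comm]
    congr 1; funext σ
    rw [← Finset.smul_sum]
    congr 1
    rw [← Equiv.sum_comp σ (fun r => ∏ i, if σ i = r then B r i else P (σ i) i)]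
    refine Finset.sum_congr rfl fun i0 _ => ?_
    rw [← Finset.mul_prod_erase Finset.univ
      (fun i => if σ i = σ i0 then B (σ i0) i else P (σ i) i) (Finset.mem_univ i0),
      if_pos rfl, mul_comm]
    congr 1
    refine Finset.prod_congr rfl fun j hj => ?_
    rw [if_neg]
    exact fun h => (Finset.mem_erase.1 hj).1 (σ.injective h)
  rw [hfun]
  exact hval ▸ h2

section
variable {n k : ℕ}

lemma orderEmbOfFin_position {s : Finset (Fin n)} (h : s.card = k) (p : Fin k) :
    (s.filter (· < s.orderEmbOfFin h p)).card = (p : ℕ) := by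
  have himg : s.filter (· < s.orderEmbOfFin h p)
      = (Finset.univ.filter (· < p)).image (s.orderEmbOfFin h) := by
    ext x
    simp only [mem_filter, mem_image, mem_univ, true_and]
    constructor
    · rintro ⟨hx, hlt⟩
      have : x ∈ Set.range (s.orderEmbOfFin h) := by
        rw [Finset.range_orderEmbOfFin]; exact hx
      obtain ⟨q, rfl⟩ := this
      exact ⟨q, (s.orderEmbOfFin h).strictMono.lt_iff_lt.1 hlt, rfl⟩
    · rintro ⟨q, hq, rfl⟩
      exact ⟨Finset.orderEmbOfFin_mem s h q, (s.orderEmbOfFin h).strictMono hq⟩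
  rw [himg, Finset.card_image_of_injective _ (s.orderEmbOfFin h).injective]
  have : Finset.univ.filter (· < p) = Finset.Iio p := by
    ext q; simp
  rw [this, Fin.card_Iio]

lemma addCompound_eq_sum (A : Matrix (Fin n) (Fin n) ℝ)
    (α β : {s : Finset (Fin n) // s.card = k}) :
    addCompound A k α β =
      ∑ r, ((((1 : Matrix (Fin n) (Fin n) ℝ).submatrix (α.1.orderEmbOfFin α.2)
          (β.1.orderEmbOfFin β.2)).updateRow r
        (A.submatrix (α.1.orderEmbOfFin α.2) (β.1.orderEmbOfFin β.2) r)).det) := by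
  have h : (fun ε : ℝ => mulCompound (1 + ε • A) k α β)
      = fun ε : ℝ => (((1 : Matrix (Fin n) (Fin n) ℝ).submatrix (α.1.orderEmbOfFin α.2)
          (β.1.orderEmbOfFin β.2))
        + ε • (A.submatrix (α.1.orderEmbOfFin α.2) (β.1.orderEmbOfFin β.2))).det := by
    funext ε
    unfold mulCompound
    congr 1
  unfold addCompound
  rw [h]
  exact (hasDerivAt_det_add_smul _ _).deriv

lemma addCompound_eq_zero_of_two_le (A : Matrix (Fin n) (Fin n) ℝ)
    (α β : {s : Finset (Fin n) // s.card = k}) (h2 : 2 ≤ (α.1 \ β.1).card) :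
    addCompound A k α β = 0 := by
  rw [addCompound_eq_sum]
  refine Finset.sum_eq_zero fun r _ => ?_
  set e := α.1.orderEmbOfFin α.2
  set f := β.1.orderEmbOfFin β.2
  have hsub : α.1 \ β.1 ⊆ (Finset.univ.filter (fun s : Fin k => e s ∉ β.1)).image e := by
    intro x hx
    rw [Finset.mem_sdiff] at hx
    have : x ∈ Set.range e := by rw [Finset.range_orderEmbOfFin]; exact hx.1
    obtain ⟨q, rfl⟩ := this
    exact Finset.mem_image.2 ⟨q, Finset.mem_filter.2 ⟨Finset.mem_univ _, hx.2⟩, rfl⟩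
  have hcard : 1 < (Finset.univ.filter (fun s : Fin k => e s ∉ β.1)).card := by
    calc 1 < (α.1 \ β.1).card := h2
    _ ≤ ((Finset.univ.filter (fun s : Fin k => e s ∉ β.1)).image e).card :=
        Finset.card_le_card hsub
    _ ≤ _ := Finset.card_image_le
  obtain ⟨s, hs, hsr⟩ := Finset.exists_mem_ne hcard r
  rw [Finset.mem_filter] at hs
  refine Matrix.det_eq_zero_of_row_eq_zero s fun c => ?_
  rw [Matrix.updateRow_ne hsr]
  exact Matrix.one_apply_ne fun hc => hs.2 (hc ▸ Finset.orderEmbOfFin_mem _ _ _)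

end

section
variable {n k : ℕ}

lemma addCompound_single (A : Matrix (Fin n) (Fin n) ℝ)
    (α β : {s : Finset (Fin n) // s.card = k}) (i j : Fin n)
    (hab : α.1 \ β.1 = {i}) (hba : β.1 \ α.1 = {j}) :
    addCompound A k α β
      = (-1 : ℝ) ^ ((α.1.filter (· < i)).card + (β.1.filter (· < j)).card) * A i j := by
  have hiα : i ∈ α.1 := (Finset.mem_sdiff.1 (hab ▸ Finset.mem_singleton_self i)).1
  have hiβ : i ∉ β.1 := (Finset.mem_sdiff.1 (hab ▸ Finset.mem_singleton_self i)).2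
  have hjβ : j ∈ β.1 := (Finset.mem_sdiff.1 (hba ▸ Finset.mem_singleton_self j)).1
  have hjα : j ∉ α.1 := (Finset.mem_sdiff.1 (hba ▸ Finset.mem_singleton_self j)).2
  obtain ⟨K, rfl⟩ : ∃ K, k = K + 1 :=
    ⟨k - 1, by have h0 : 0 < k := α.2 ▸ Finset.card_pos.2 ⟨i, hiα⟩; omega⟩
  set e := α.1.orderEmbOfFin α.2 with he
  set f := β.1.orderEmbOfFin β.2 with hf
  obtain ⟨ℓ, hℓ⟩ : ∃ ℓ, e ℓ = i := by
    have : i ∈ Set.range e := by rw [he, Finset.range_orderEmbOfFin]; exact hiα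
    exact this
  obtain ⟨m, hm⟩ : ∃ m, f m = j := by
    have : j ∈ Set.range f := by rw [hf, Finset.range_orderEmbOfFin]; exact hjβ
    exact this
  have hℓc : (α.1.filter (· < i)).card = (ℓ : ℕ) := by
    rw [← hℓ]; exact orderEmbOfFin_position α.2 ℓ
  have hmc : (β.1.filter (· < j)).card = (m : ℕ) := by
    rw [← hm]; exact orderEmbOfFin_position β.2 m
  have hS : α.1.erase i = β.1.erase j := by
    ext x
    simp only [Finset.mem_erase]
    constructor
    · rintro ⟨hxi, hxα⟩
      have hxβ : x ∈ β.1 := by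
        by_contra hxβ
        have hx : x ∈ α.1 \ β.1 := Finset.mem_sdiff.2 ⟨hxα, hxβ⟩
        rw [hab, Finset.mem_singleton] at hx; exact hxi hx
      exact ⟨fun h => hjα (h ▸ hxα), hxβ⟩
    · rintro ⟨hxj, hxβ⟩
      have hxα : x ∈ α.1 := by
        by_contra hxα
        have hx : x ∈ β.1 \ α.1 := Finset.mem_sdiff.2 ⟨hxβ, hxα⟩
        rw [hba, Finset.mem_singleton] at hx; exact hxj hx
      exact ⟨fun h => hiβ (h ▸ hxβ), hxα⟩
  have hScard : (α.1.erase i).card = K := by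
    rw [Finset.card_erase_of_mem hiα, α.2]; omega
  have hg : (fun x => e (ℓ.succAbove x)) = ⇑((α.1.erase i).orderEmbOfFin hScard) := by
    refine Finset.orderEmbOfFin_unique hScard (fun x => ?_)
      (e.strictMono.comp (Fin.strictMono_succAbove ℓ))
    refine Finset.mem_erase.2 ⟨fun hx => ?_, Finset.orderEmbOfFin_mem _ _ _⟩
    exact Fin.succAbove_ne ℓ x (e.injective (hx.trans hℓ.symm))
  have hg' : (fun x => f (m.succAbove x)) = ⇑((α.1.erase i).orderEmbOfFin hScard) := by
    refine Finset.orderEmbOfFin_unique hScard (fun x => ?_)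
      (f.strictMono.comp (Fin.strictMono_succAbove m))
    rw [hS]
    refine Finset.mem_erase.2 ⟨fun hx => ?_, Finset.orderEmbOfFin_mem _ _ _⟩
    exact Fin.succAbove_ne m x (f.injective (hx.trans hm.symm))
  set P := (1 : Matrix (Fin n) (Fin n) ℝ).submatrix e f with hP
  set B := A.submatrix e f with hB
  have hminor : (Matrix.updateRow P ℓ (B ℓ)).submatrix ℓ.succAbove m.succAbove = 1 := by
    ext r c
    rw [Matrix.submatrix_apply, Matrix.updateRow_ne (Fin.succAbove_ne ℓ r), hP,
      Matrix.submatrix_apply, congrFun hg r, congrFun hg' c]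
    by_cases hrc : r = c
    · subst hrc; simp [Matrix.one_apply]
    · rw [Matrix.one_apply_ne fun hcc => hrc (((α.1.erase i).orderEmbOfFin hScard).injective hcc),
        Matrix.one_apply_ne hrc]
  have hzero : ∀ r, r ≠ ℓ → (Matrix.updateRow P r (B r)).det = 0 := by
    intro r hr
    refine Matrix.det_eq_zero_of_row_eq_zero ℓ fun c => ?_
    rw [Matrix.updateRow_ne (Ne.symm hr), hP, Matrix.submatrix_apply, hℓ]
    exact Matrix.one_apply_ne fun hc => hiβ (hc ▸ Finset.orderEmbOfFin_mem _ _ _)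
  have hmain : (Matrix.updateRow P ℓ (B ℓ)).det = (-1:ℝ)^((ℓ:ℕ)+(m:ℕ)) * A i j := by
    rw [Matrix.det_succ_row _ ℓ]
    have hterm0 : ∀ c ∈ Finset.univ, c ≠ m → (-1:ℝ)^((ℓ:ℕ)+(c:ℕ)) *
        (Matrix.updateRow P ℓ (B ℓ)) ℓ c *
        ((Matrix.updateRow P ℓ (B ℓ)).submatrix ℓ.succAbove c.succAbove).det = 0 := by
      intro c _ hcm
      obtain ⟨m', hm'⟩ := Fin.exists_succAbove_eq (Ne.symm hcm)
      have hd : ((Matrix.updateRow P ℓ (B ℓ)).submatrix ℓ.succAbove c.succAbove).det = 0 := by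
        refine Matrix.det_eq_zero_of_column_eq_zero m' fun r => ?_
        rw [Matrix.submatrix_apply, Matrix.updateRow_ne (Fin.succAbove_ne ℓ r), hm', hP,
          Matrix.submatrix_apply, hm]
        exact Matrix.one_apply_ne fun hh => hjα (hh ▸ Finset.orderEmbOfFin_mem _ _ _)
      rw [hd, mul_zero]
    rw [Finset.sum_eq_single m hterm0 (fun h => absurd (Finset.mem_univ m) h)]
    rw [hminor, Matrix.det_one, mul_one, Matrix.updateRow_self, hB, Matrix.submatrix_apply, hℓ, hm]
  rw [addCompound_eq_sum]
  rw [Finset.sum_eq_single ℓ (fun r _ hr => hzero r hr) (fun h => absurd (Finset.mem_univ ℓ) h),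
    hmain, hℓc, hmc]

end

section
variable {n k : ℕ}

lemma filter_lt_card_split (S : Finset (Fin n)) {i j : Fin n} (hij : i < j) (hi : i ∉ S) :
    (S.filter (· < j)).card = (S.filter (· < i)).card
      + (S.filter (fun x => i < x ∧ x < j)).card := by
  rw [← Finset.card_union_of_disjoint (by
    simp only [Finset.disjoint_left, Finset.mem_filter]
    rintro x ⟨-, h1⟩ ⟨-, h2, -⟩
    exact absurd h1 (not_lt.2 h2.le))]
  congr 1
  ext x
  simp only [Finset.mem_union, Finset.mem_filter]
  constructor
  · rintro ⟨hx, hxj⟩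
    rcases lt_trichotomy x i with h|h|h
    · exact Or.inl ⟨hx, h⟩
    · exact absurd (h ▸ hx) hi
    · exact Or.inr ⟨hx, h, hxj⟩
  · rintro (⟨hx, h⟩|⟨hx, h1, h2⟩)
    · exact ⟨hx, h.trans hij⟩
    · exact ⟨hx, h2⟩

lemma addCompound_sign (A : Matrix (Fin n) (Fin n) ℝ)
    (α β : {s : Finset (Fin n) // s.card = k}) (i j : Fin n)
    (hab : α.1 \ β.1 = {i}) (hba : β.1 \ α.1 = {j}) :
    addCompound A k α β
      = (-1 : ℝ) ^ (((α.1 ∩ β.1).filter (fun x => min i j < x ∧ x < max i j)).card)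
        * A i j := by
  have hiα : i ∈ α.1 := (Finset.mem_sdiff.1 (hab ▸ Finset.mem_singleton_self i)).1
  have hiβ : i ∉ β.1 := (Finset.mem_sdiff.1 (hab ▸ Finset.mem_singleton_self i)).2
  have hjβ : j ∈ β.1 := (Finset.mem_sdiff.1 (hba ▸ Finset.mem_singleton_self j)).1
  have hjα : j ∉ α.1 := (Finset.mem_sdiff.1 (hba ▸ Finset.mem_singleton_self j)).2
  have hij : i ≠ j := fun h => hjα (h ▸ hiα)
  set S := α.1 ∩ β.1 with hSdef
  have hiS : i ∉ S := fun h => hiβ (Finset.mem_inter.1 h).2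
  have hjS : j ∉ S := fun h => hjα (Finset.mem_inter.1 h).1
  have hαf : α.1.filter (· < i) = S.filter (· < i) := by
    ext x
    simp only [Finset.mem_filter, hSdef, Finset.mem_inter]
    refine ⟨fun ⟨hx, hlt⟩ => ⟨⟨hx, ?_⟩, hlt⟩, fun ⟨hx, hlt⟩ => ⟨hx.1, hlt⟩⟩
    by_contra hxβ
    have h := Finset.mem_sdiff.2 ⟨hx, hxβ⟩
    rw [hab, Finset.mem_singleton] at h
    exact absurd hlt (h ▸ lt_irrefl i)
  have hβf : β.1.filter (· < j) = S.filter (· < j) := by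
    ext x
    simp only [Finset.mem_filter, hSdef, Finset.mem_inter]
    refine ⟨fun ⟨hx, hlt⟩ => ⟨⟨?_, hx⟩, hlt⟩, fun ⟨hx, hlt⟩ => ⟨hx.2, hlt⟩⟩
    by_contra hxα
    have h := Finset.mem_sdiff.2 ⟨hx, hxα⟩
    rw [hba, Finset.mem_singleton] at h
    exact absurd hlt (h ▸ lt_irrefl j)
  rw [addCompound_single A α β i j hab hba, hαf, hβf]
  congr 1
  rcases hij.lt_or_gt with hlt | hlt
  · rw [min_eq_left hlt.le, max_eq_right hlt.le]
    rw [filter_lt_card_split S hlt hiS]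
    have : ∀ c t : ℕ, (-1:ℝ) ^ (c + (c + t)) = (-1) ^ t := by
      intro c t
      rw [show c + (c + t) = 2 * c + t by ring, pow_add, pow_mul]
      simp
    exact this _ _
  · rw [min_eq_right hlt.le, max_eq_left hlt.le]
    rw [filter_lt_card_split S hlt hjS]
    have : ∀ c t : ℕ, (-1:ℝ) ^ ((c + t) + c) = (-1) ^ t := by
      intro c t
      rw [show (c + t) + c = 2 * c + t by ring, pow_add, pow_mul]
      simp
    exact this _ _

end

section
variable {n k : ℕ}

lemma fin_coe_min (i j : Fin n) : ((min i j : Fin n) : ℕ) = min (i:ℕ) (j:ℕ) := by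
  rcases le_total i j with h|h
  · rw [min_eq_left h, min_eq_left (Fin.le_def.1 h)]
  · rw [min_eq_right h, min_eq_right (Fin.le_def.1 h)]

lemma fin_coe_max (i j : Fin n) : ((max i j : Fin n) : ℕ) = max (i:ℕ) (j:ℕ) := by
  rcases le_total i j with h|h
  · rw [max_eq_right h, max_eq_right (Fin.le_def.1 h)]
  · rw [max_eq_left h, max_eq_left (Fin.le_def.1 h)]

lemma ioo_card (i j : Fin n) : (Finset.Ioo (min i j) (max i j)).card
    = max (i:ℕ) (j:ℕ) - min (i:ℕ) (j:ℕ) - 1 := by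
  rw [Fin.card_Ioo, fin_coe_min, fin_coe_max]

lemma metzler_sign (A : Matrix (Fin n) (Fin n) ℝ)
    (hM : IsMetzler (addCompound A k)) (hk1 : 1 ≤ k)
    (i j : Fin n) (hij : i ≠ j) (t : ℕ)
    (ht3 : t ≤ k - 1)
    (ht1 : t ≤ (Finset.Ioo (min i j) (max i j)).card)
    (ht2 : k - 1 - t ≤ n - 2 - (Finset.Ioo (min i j) (max i j)).card) :
    0 ≤ (-1:ℝ)^t * A i j := by
  set I := Finset.Ioo (min i j) (max i j) with hI
  have hiI : i ∉ I := by
    rw [hI, Finset.mem_Ioo]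
    rintro ⟨hx1, hx2⟩
    rcases le_total i j with h|h
    · rw [min_eq_left h] at hx1; exact lt_irrefl _ hx1
    · rw [max_eq_left h] at hx2; exact lt_irrefl _ hx2
  have hjI : j ∉ I := by
    rw [hI, Finset.mem_Ioo]
    rintro ⟨hx1, hx2⟩
    rcases le_total i j with h|h
    · rw [max_eq_right h] at hx2; exact lt_irrefl _ hx2
    · rw [min_eq_right h] at hx1; exact lt_irrefl _ hx1
  set D := insert i (insert j I) with hD
  have hDcard : D.card = I.card + 2 := by
    rw [hD, Finset.card_insert_of_notMem (by
        simp only [Finset.mem_insert]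
        rintro (h|h)
        exacts [hij h, hiI h]),
      Finset.card_insert_of_notMem hjI]
  have hO : ((Finset.univ : Finset (Fin n)) \ D).card = n - (I.card + 2) := by
    rw [Finset.card_sdiff_of_subset (Finset.subset_univ D), Finset.card_univ, Fintype.card_fin, hDcard]
  obtain ⟨T, hTsub, hTcard⟩ := Finset.exists_subset_card_eq ht1
  obtain ⟨W, hWsub, hWcard⟩ := Finset.exists_subset_card_eq
    (s := (Finset.univ : Finset (Fin n)) \ D) (n := k - 1 - t) (by rw [hO]; omega)
  have hdisj : Disjoint T W := by
    rw [Finset.disjoint_left]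
    intro x hxT hxW
    exact (Finset.mem_sdiff.1 (hWsub hxW)).2
      (Finset.mem_insert_of_mem (Finset.mem_insert_of_mem (hTsub hxT)))
  set S := T ∪ W with hSdef
  have hScard : S.card = k - 1 := by
    rw [hSdef, Finset.card_union_of_disjoint hdisj, hTcard, hWcard]; omega
  have hiS : i ∉ S := by
    rw [hSdef, Finset.mem_union]
    rintro (h|h)
    · exact hiI (hTsub h)
    · exact (Finset.mem_sdiff.1 (hWsub h)).2 (Finset.mem_insert_self i _)
  have hjS : j ∉ S := by
    rw [hSdef, Finset.mem_union]
    rintro (h|h)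
    · exact hjI (hTsub h)
    · exact (Finset.mem_sdiff.1 (hWsub h)).2
        (Finset.mem_insert_of_mem (Finset.mem_insert_self j _))
  have hαc : (insert i S).card = k := by
    rw [Finset.card_insert_of_notMem hiS, hScard]; omega
  have hβc : (insert j S).card = k := by
    rw [Finset.card_insert_of_notMem hjS, hScard]; omega
  set α : {s : Finset (Fin n) // s.card = k} := ⟨insert i S, hαc⟩ with hα
  set β : {s : Finset (Fin n) // s.card = k} := ⟨insert j S, hβc⟩ with hβ
  have hab : α.1 \ β.1 = {i} := by
    ext x
    simp only [hα, hβ, Finset.mem_sdiff, Finset.mem_insert, Finset.mem_singleton]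
    constructor
    · rintro ⟨h1 | h1, h2⟩
      · exact h1
      · exact absurd (Or.inr h1) h2
    · rintro rfl
      exact ⟨Or.inl rfl, fun h => h.elim hij hiS⟩
  have hba : β.1 \ α.1 = {j} := by
    ext x
    simp only [hα, hβ, Finset.mem_sdiff, Finset.mem_insert, Finset.mem_singleton]
    constructor
    · rintro ⟨h1 | h1, h2⟩
      · exact h1
      · exact absurd (Or.inr h1) h2
    · rintro rfl
      exact ⟨Or.inl rfl, fun h => h.elim (fun hh => hij hh.symm) hjS⟩
  have hne : α ≠ β := by
    intro h
    have hiβ : i ∉ β.1 := by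
      simp only [hβ, Finset.mem_insert]
      rintro (hh|hh)
      exacts [hij hh, hiS hh]
    exact hiβ (h ▸ (Finset.mem_insert_self i S : i ∈ α.1))
  have hinter : α.1 ∩ β.1 = S := by
    ext x
    simp only [hα, hβ, Finset.mem_inter, Finset.mem_insert]
    constructor
    · rintro ⟨h1|h1, h2|h2⟩
      · exact absurd (h1.symm.trans h2) hij
      · exact h2
      · exact h1
      · exact h1
    · intro h; exact ⟨Or.inr h, Or.inr h⟩
  have hfilter : S.filter (fun x => min i j < x ∧ x < max i j) = T := by
    ext x
    simp only [Finset.mem_filter, hSdef, Finset.mem_union]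
    constructor
    · rintro ⟨h1|h1, h2⟩
      · exact h1
      · exact absurd (Finset.mem_insert_of_mem (Finset.mem_insert_of_mem
          (Finset.mem_Ioo.2 h2))) (Finset.mem_sdiff.1 (hWsub h1)).2
    · intro hT
      exact ⟨Or.inl hT, Finset.mem_Ioo.1 (hTsub hT)⟩
  have hm := hM α β hne
  rw [addCompound_sign A α β i j hab hba, hinter, hfilter, hTcard] at hm
  exact hm

end

section
variable {n : ℕ}

lemma ioo_card_dist (i j : Fin n) :
    (Finset.Ioo (min i j) (max i j)).card = Nat.dist (i:ℕ) (j:ℕ) - 1 := by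
  rw [ioo_card]
  rcases le_total (i:ℕ) (j:ℕ) with h|h
  · rw [max_eq_right h, min_eq_left h, Nat.dist_eq_sub_of_le h]
  · rw [max_eq_left h, min_eq_right h, Nat.dist_comm, Nat.dist_eq_sub_of_le h]

lemma dist_le_fin (i j : Fin n) : Nat.dist (i:ℕ) (j:ℕ) ≤ n - 1 := by
  have hi := i.isLt; have hj := j.isLt
  rcases le_total (i:ℕ) (j:ℕ) with h|h
  · rw [Nat.dist_eq_sub_of_le h]; omega
  · rw [Nat.dist_comm, Nat.dist_eq_sub_of_le h]; omega

lemma dist_pos_fin {i j : Fin n} (hij : i ≠ j) : 1 ≤ Nat.dist (i:ℕ) (j:ℕ) := by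
  have h : (i:ℕ) ≠ (j:ℕ) := fun h => hij (Fin.ext h)
  rcases le_total (i:ℕ) (j:ℕ) with hle|hle
  · rw [Nat.dist_eq_sub_of_le hle]; omega
  · rw [Nat.dist_comm, Nat.dist_eq_sub_of_le hle]; omega

end


end

/-- For odd `k` with `1 < k < n-1`, `A^{[k]}` is Metzler iff `a_{1n}, a_{n1} ≥ 0`,
`a_{ij} ≥ 0` whenever `|i - j| = 1`, and `a_{ij} = 0` whenever `1 < |i - j| < n-1`. -/
theorem addCompound_metzler_odd {n : ℕ} (hn : 3 ≤ n) (A : Matrix (Fin n) (Fin n) ℝ)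
    (k : ℕ) (hodd : Odd k) (hk1 : 1 < k) (hk2 : k < n - 1) :
    IsMetzler (addCompound A k) ↔
      (0 ≤ A ⟨0, by omega⟩ ⟨n - 1, by omega⟩ ∧ 0 ≤ A ⟨n - 1, by omega⟩ ⟨0, by omega⟩ ∧
        (∀ i j : Fin n, Nat.dist i j = 1 → 0 ≤ A i j) ∧
        (∀ i j : Fin n, 1 < Nat.dist i j → Nat.dist i j < n - 1 → A i j = 0)) := by
  obtain ⟨w, hw⟩ := hodd
  have hkn : k ≤ n - 2 := by omega
  have hn0 : 0 < n := by omega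
  have hn1 : n - 1 < n := by omega
  constructor
  · intro hM
    refine ⟨?_, ?_, ?_, ?_⟩
    · have h := metzler_sign A hM (by omega) ⟨0, by omega⟩ ⟨n - 1, by omega⟩
        (Fin.ne_of_val_ne (by simp <;> omega)) (k - 1) le_rfl
        (by rw [ioo_card_dist]
            simp only [Nat.dist_eq_sub_of_le (by simp <;> omega : (0:ℕ) ≤ n - 1)]
            simp <;> omega)
        (by rw [ioo_card_dist]
            simp only [Nat.dist_eq_sub_of_le (by simp <;> omega : (0:ℕ) ≤ n - 1)]
            simp <;> omega)
      rwa [Even.neg_one_pow ⟨w, by omega⟩, one_mul] at h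
    · have h := metzler_sign A hM (by omega) ⟨n - 1, by omega⟩ ⟨0, by omega⟩
        (Fin.ne_of_val_ne (by simp <;> omega)) (k - 1) le_rfl
        (by rw [ioo_card_dist, Nat.dist_comm]
            simp only [Nat.dist_eq_sub_of_le (by simp <;> omega : (0:ℕ) ≤ n - 1)]
            simp <;> omega)
        (by rw [ioo_card_dist, Nat.dist_comm]
            simp only [Nat.dist_eq_sub_of_le (by simp <;> omega : (0:ℕ) ≤ n - 1)]
            simp <;> omega)
      rwa [Even.neg_one_pow ⟨w, by omega⟩, one_mul] at h
    · intro i j hdist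
      have h := metzler_sign A hM (by omega) i j
        (fun hh => by rw [hh, Nat.dist_self] at hdist; omega) 0 (by omega)
        (by omega) (by rw [ioo_card_dist, hdist]; omega)
      rwa [pow_zero, one_mul] at h
    · intro i j hd1 hd2
      set d : ℕ := Nat.dist (i:ℕ) (j:ℕ) - 1 with hd
      have hdub : d ≤ n - 3 := by have := dist_le_fin i j; omega
      have hij : i ≠ j := fun hh => by rw [hh, Nat.dist_self] at hd1; omega
      set t0 : ℕ := k - 1 - (n - 2 - d) with ht0
      have h0 := metzler_sign A hM (by omega) i j hij t0 (by omega)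
        (by rw [ioo_card_dist, ← hd]; omega) (by rw [ioo_card_dist, ← hd]; omega)
      have h1 := metzler_sign A hM (by omega) i j hij (t0 + 1) (by omega)
        (by rw [ioo_card_dist, ← hd]; omega) (by rw [ioo_card_dist, ← hd]; omega)
      rw [pow_succ, mul_assoc, mul_comm (-1 : ℝ), ← mul_assoc] at h1
      have hx : (-1:ℝ)^t0 * A i j = 0 := le_antisymm (by nlinarith) h0
      rcases Nat.even_or_odd t0 with he|ho
      · rwa [Even.neg_one_pow he, one_mul] at hx
      · rwa [Odd.neg_one_pow ho, neg_one_mul, neg_eq_zero] at hx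
  · rintro ⟨hc1, hc2, hc3, hc4⟩ α β hne
    have hne1 : (α.1 \ β.1).card ≠ 0 := by
      intro h
      rw [Finset.card_eq_zero, Finset.sdiff_eq_empty_iff_subset] at h
      exact hne (Subtype.ext (Finset.eq_of_subset_of_card_le h (by rw [α.2, β.2])))
    by_cases hone : (α.1 \ β.1).card = 1
    · obtain ⟨i, hi⟩ := Finset.card_eq_one.1 hone
      have e1 := Finset.card_sdiff_add_card_inter α.1 β.1
      have e2 := Finset.card_sdiff_add_card_inter β.1 α.1
      rw [Finset.inter_comm] at e2
      rw [α.2, hone] at e1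
      rw [β.2] at e2
      have hba1 : (β.1 \ α.1).card = 1 := by omega
      obtain ⟨j, hj⟩ := Finset.card_eq_one.1 hba1
      have hiα : i ∈ α.1 := (Finset.mem_sdiff.1 (hi ▸ Finset.mem_singleton_self i)).1
      have hiβ : i ∉ β.1 := (Finset.mem_sdiff.1 (hi ▸ Finset.mem_singleton_self i)).2
      have hjβ : j ∈ β.1 := (Finset.mem_sdiff.1 (hj ▸ Finset.mem_singleton_self j)).1
      have hjα : j ∉ α.1 := (Finset.mem_sdiff.1 (hj ▸ Finset.mem_singleton_self j)).2
      have hij : i ≠ j := fun h => hjα (h ▸ hiα)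
      have hiS : i ∉ α.1 ∩ β.1 := fun h => hiβ (Finset.mem_inter.1 h).2
      have hjS : j ∉ α.1 ∩ β.1 := fun h => hjα (Finset.mem_inter.1 h).1
      have hScard : (α.1 ∩ β.1).card = k - 1 := by omega
      rw [addCompound_sign A α β i j hi hj]
      have htle : ((α.1 ∩ β.1).filter (fun x => min i j < x ∧ x < max i j)).card
          ≤ (Finset.Ioo (min i j) (max i j)).card := by
        refine Finset.card_le_card fun x hx => ?_
        rw [Finset.mem_Ioo]
        exact (Finset.mem_filter.1 hx).2
      by_cases hdist1 : Nat.dist (i:ℕ) (j:ℕ) = 1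
      · have ht : ((α.1 ∩ β.1).filter (fun x => min i j < x ∧ x < max i j)).card = 0 := by
          rw [ioo_card_dist, hdist1] at htle; omega
        rw [ht, pow_zero, one_mul]
        exact hc3 i j hdist1
      by_cases hdistn : Nat.dist (i:ℕ) (j:ℕ) = n - 1
      · have hiv : ((i:ℕ) = 0 ∧ (j:ℕ) = n - 1) ∨ ((i:ℕ) = n - 1 ∧ (j:ℕ) = 0) := by
          have h1 := i.isLt; have h2 := j.isLt
          rcases le_total (i:ℕ) (j:ℕ) with h|h
          · rw [Nat.dist_eq_sub_of_le h] at hdistn; left; omega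
          · rw [Nat.dist_comm, Nat.dist_eq_sub_of_le h] at hdistn; right; omega
        rcases hiv with ⟨hv1, hv2⟩ | ⟨hv1, hv2⟩
        · have hminv : min (i:ℕ) (j:ℕ) = 0 := by rw [hv1, hv2]; simp
          have hmaxv : max (i:ℕ) (j:ℕ) = n - 1 := by rw [hv1, hv2]; simp
          have htS : (α.1 ∩ β.1).filter (fun x => min i j < x ∧ x < max i j)
              = α.1 ∩ β.1 := by
            refine Finset.filter_true_of_mem fun x hx => ?_
            have hxi : (x:ℕ) ≠ (i:ℕ) := fun h => hiS (Fin.ext h ▸ hx)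
            have hxj : (x:ℕ) ≠ (j:ℕ) := fun h => hjS (Fin.ext h ▸ hx)
            have hxlt := x.isLt
            constructor
            · rw [Fin.lt_def, fin_coe_min, hminv]; omega
            · rw [Fin.lt_def, fin_coe_max, hmaxv]; omega
          rw [htS, hScard, Even.neg_one_pow ⟨w, by omega⟩, one_mul]
          have hieq : i = (⟨0, hn0⟩ : Fin n) := Fin.ext hv1
          have hjeq : j = (⟨n - 1, hn1⟩ : Fin n) := Fin.ext hv2
          rw [hieq, hjeq]
          exact hc1
        · have hminv : min (i:ℕ) (j:ℕ) = 0 := by rw [hv1, hv2]; simp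
          have hmaxv : max (i:ℕ) (j:ℕ) = n - 1 := by rw [hv1, hv2]; simp
          have htS : (α.1 ∩ β.1).filter (fun x => min i j < x ∧ x < max i j)
              = α.1 ∩ β.1 := by
            refine Finset.filter_true_of_mem fun x hx => ?_
            have hxi : (x:ℕ) ≠ (i:ℕ) := fun h => hiS (Fin.ext h ▸ hx)
            have hxj : (x:ℕ) ≠ (j:ℕ) := fun h => hjS (Fin.ext h ▸ hx)
            have hxlt := x.isLt
            constructor
            · rw [Fin.lt_def, fin_coe_min, hminv]; omega
            · rw [Fin.lt_def, fin_coe_max, hmaxv]; omega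
          rw [htS, hScard, Even.neg_one_pow ⟨w, by omega⟩, one_mul]
          have hieq : i = (⟨n - 1, hn1⟩ : Fin n) := Fin.ext hv1
          have hjeq : j = (⟨0, hn0⟩ : Fin n) := Fin.ext hv2
          rw [hieq, hjeq]
          exact hc2
      · have hdgt : 1 < Nat.dist (i:ℕ) (j:ℕ) := by
          have := dist_pos_fin hij; omega
        have hdlt : Nat.dist (i:ℕ) (j:ℕ) < n - 1 := by
          have := dist_le_fin i j; omega
        rw [hc4 i j hdgt hdlt, mul_zero]
    · have h2 : 2 ≤ (α.1 \ β.1).card := by omega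
      rw [addCompound_eq_zero_of_two_le A α β h2]
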